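/- If r is a square root on a pseudo MV-algebra M, then r(0)⁻ = r(0)∼, and there exists a unique Boolean element u ∈ M, namely u = r(0)⁻ ⊙ r(0)⁻, such that u ∨ r(0) = r(0)⁻. -/
import Mathlib


/-- A pseudo MV-algebra `(M; ⊕, ⁻, ∼, 0, 1)` satisfying axioms (A1)–(A8),
with `x ⊙ y := (y⁻ ⊕ x⁻)∼`. -/
class PseudoMV (M : Type*) where
  oplus : M → M → M
  lneg : M → M
  rneg : M → M
  zero : M
  one : M
  oplus_assoc : ∀ x y z : M, oplus x (oplus y z) = oplus (oplus x y) z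
  oplus_zero : ∀ x : M, oplus x zero = x
  zero_oplus : ∀ x : M, oplus zero x = x
  oplus_one : ∀ x : M, oplus x one = one
  one_oplus : ∀ x : M, oplus one x = one
  lneg_one : lneg one = zero
  rneg_one : rneg one = zero
  a5 : ∀ x y : M, rneg (oplus (lneg x) (lneg y)) = lneg (oplus (rneg x) (rneg y))
  a6₁ : ∀ x y : M,
    oplus x (rneg (oplus (lneg y) (lneg (rneg x)))) =
      oplus y (rneg (oplus (lneg x) (lneg (rneg y))))
  a6₂ : ∀ x y : M,
    oplus x (rneg (oplus (lneg y) (lneg (rneg x)))) =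
      oplus (rneg (oplus (lneg (lneg y)) (lneg x))) y
  a6₃ : ∀ x y : M,
    oplus x (rneg (oplus (lneg y) (lneg (rneg x)))) =
      oplus (rneg (oplus (lneg (lneg x)) (lneg y))) x
  a7 : ∀ x y : M,
    rneg (oplus (lneg (oplus (lneg x) y)) (lneg x)) =
      rneg (oplus (lneg y) (lneg (oplus x (rneg y))))
  a8 : ∀ x : M, rneg (lneg x) = x

namespace PseudoMV

variable {M : Type*} [PseudoMV M]

/-- `x ⊙ y := (y⁻ ⊕ x⁻)∼`. -/
def mul (x y : M) : M := rneg (oplus (lneg y) (lneg x))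

/-- `x ∨ y = x ⊕ (x∼ ⊙ y)` (axiom (A6)). -/
def sup (x y : M) : M := oplus x (mul (rneg x) y)

/-- `x ∧ y = x ⊙ (x⁻ ⊕ y)` (axiom (A7)). -/
def inf (x y : M) : M := mul x (oplus (lneg x) y)

/-- The lattice order of a pseudo MV-algebra. -/
def le (x y : M) : Prop := sup x y = y

/-- `x → y := x⁻ ⊕ y`. -/
def arrow (x y : M) : M := oplus (lneg x) y

/-- `x ⇝ y := y ⊕ x∼`. -/
def squig (x y : M) : M := oplus y (rneg x)

/-- A weak square root: (Sq1) and (Sq2). -/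
def IsWeakSqrt (r : M → M) : Prop :=
  (∀ x : M, mul (r x) (r x) = x) ∧
  (∀ x y : M, le (mul y y) x → le y (r x))

/-- A square root: (Sq1), (Sq2) and (Sq3). -/
def IsSqrt (r : M → M) : Prop :=
  IsWeakSqrt r ∧
  (∀ x : M, r (lneg x) = arrow (r x) (r zero) ∧ r (rneg x) = squig (r x) (r zero))

end PseudoMV

open PseudoMV

namespace PseudoMV

variable {M : Type*} [PseudoMV M]

lemma mul_def (x y : M) : mul x y = rneg (oplus (lneg y) (lneg x)) := rfl

lemma lr (x : M) : lneg (rneg x) = x := by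
  have h := a5 x (one : M)
  rw [lneg_one, oplus_zero, rneg_one, oplus_zero] at h
  rw [a8] at h
  exact h.symm

lemma lneg_zero : lneg (zero : M) = one := by rw [← rneg_one, lr]

lemma rneg_zero : rneg (zero : M) = one := by rw [← lneg_one, a8]

lemma mul_def2 (x y : M) : mul x y = lneg (oplus (rneg y) (rneg x)) := a5 y x

lemma lneg_mul (x y : M) : lneg (mul x y) = oplus (lneg y) (lneg x) := by
  rw [mul_def, lr]

lemma rneg_mul (x y : M) : rneg (mul x y) = oplus (rneg y) (rneg x) := by
  rw [mul_def2, a8]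

lemma lneg_oplus (x y : M) : lneg (oplus x y) = mul (lneg y) (lneg x) := by
  rw [mul_def2, a8, a8]

lemma rneg_oplus (x y : M) : rneg (oplus x y) = mul (rneg y) (rneg x) := by
  rw [mul_def, lr, lr]

lemma oplus_rneg_self (x : M) : oplus x (rneg x) = one := by
  have h := a6₁ x (one : M)
  rw [lneg_one, zero_oplus, lr, one_oplus] at h
  exact h

lemma lneg_oplus_self (x : M) : oplus (lneg x) x = one := by
  have h := a6₂ (one : M) x
  rw [one_oplus, lneg_one, oplus_zero, a8] at h
  exact h.symm

lemma mul_lneg_self (x : M) : mul x (lneg x) = zero := by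
  rw [mul_def2, a8, oplus_rneg_self, lneg_one]

lemma sup_comm (x y : M) : sup x y = sup y x := a6₁ x y

lemma sup_eq₂ (x y : M) : sup x y = oplus (mul x (lneg y)) y := a6₂ x y

lemma sup_eq₃ (x y : M) : sup x y = oplus (mul y (lneg x)) x := a6₃ x y

lemma lneg_oplus_eq_one_of_le {x y : M} (h : le x y) : oplus (lneg x) y = one := by
  have e : oplus x (mul (rneg x) y) = y := h
  rw [← e, oplus_assoc, lneg_oplus_self, one_oplus]

lemma oplus_rneg_eq_one_of_le {x y : M} (h : le x y) : oplus y (rneg x) = one := by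
  have e : oplus (mul y (lneg x)) x = y := (sup_eq₃ x y).symm.trans h
  rw [← e, ← oplus_assoc, oplus_rneg_self, oplus_one]

lemma le_of_lneg_oplus {x y : M} (h : oplus (lneg x) y = one) : le x y := by
  show sup x y = y
  rw [sup_comm]
  show oplus y (rneg (oplus (lneg x) (lneg (rneg y)))) = y
  rw [lr, h, rneg_one, oplus_zero]

lemma le_of_oplus_rneg {x y : M} (h : oplus y (rneg x) = one) : le x y := by
  show sup x y = y
  rw [sup_eq₂ x y, mul_def2, a8, h, lneg_one, zero_oplus]

lemma le_refl' (x : M) : le x x := le_of_lneg_oplus (lneg_oplus_self x)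

lemma le_trans' {x y z : M} (h1 : le x y) (h2 : le y z) : le x z := by
  apply le_of_lneg_oplus
  have e1 : oplus x (mul (rneg x) y) = y := h1
  have e2 : oplus y (mul (rneg y) z) = z := h2
  rw [← e2, ← e1, oplus_assoc, oplus_assoc, lneg_oplus_self, one_oplus, one_oplus]

lemma le_antisymm' {x y : M} (h1 : le x y) (h2 : le y x) : x = y := by
  have h0 : mul (rneg y) x = zero := by
    rw [mul_def, lr, lneg_oplus_eq_one_of_le h1, rneg_one]
  have e2 : oplus y (mul (rneg y) x) = x := h2
  rw [← e2, h0, oplus_zero]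

lemma le_of_mul_lneg {x y : M} (h : mul x (lneg y) = zero) : le x y := by
  apply le_of_oplus_rneg
  have h2 : lneg (oplus y (rneg x)) = zero := by rw [← h, mul_def2, a8]
  rw [← a8 (oplus y (rneg x)), h2, rneg_zero]

lemma le_lneg_of_le {x y : M} (h : le x y) : le (lneg y) (lneg x) := by
  apply le_of_oplus_rneg
  rw [a8]
  exact lneg_oplus_eq_one_of_le h

lemma le_rneg_of_le {x y : M} (h : le x y) : le (rneg y) (rneg x) := by
  apply le_of_lneg_oplus
  rw [lr]
  exact oplus_rneg_eq_one_of_le h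

lemma le_oplus_left (x y : M) : le x (oplus x y) :=
  le_of_lneg_oplus (by rw [oplus_assoc, lneg_oplus_self, one_oplus])

lemma le_oplus_right (x y : M) : le y (oplus x y) :=
  le_of_oplus_rneg (by rw [← oplus_assoc, oplus_rneg_self, oplus_one])

lemma mul_le_left (x y : M) : le (mul x y) x :=
  le_of_lneg_oplus (by rw [lneg_mul, ← oplus_assoc, lneg_oplus_self, oplus_one])

lemma le_of_le_of_eq {p q q' : M} (h : le p q) (e : q = q') : le p q' := e ▸ h

lemma le_of_eq_of_le {p p' q : M} (e : p = p') (h : le p q) : le p' q := e ▸ h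

lemma mul_le₁_mp {x y z : M} (h : le (mul x y) z) : le y (oplus (lneg x) z) := by
  apply le_of_lneg_oplus
  have h2 := lneg_oplus_eq_one_of_le h
  rw [lneg_mul, ← oplus_assoc] at h2
  exact h2

lemma mul_le₁_mpr {x y z : M} (h : le y (oplus (lneg x) z)) : le (mul x y) z := by
  apply le_of_lneg_oplus
  have h2 := lneg_oplus_eq_one_of_le h
  rw [lneg_mul, ← oplus_assoc]
  exact h2

lemma mul_le₂_mp {x y z : M} (h : le (mul x y) z) : le x (oplus z (rneg y)) := by
  apply le_of_oplus_rneg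
  have h2 := oplus_rneg_eq_one_of_le h
  rw [rneg_mul, oplus_assoc] at h2
  exact h2

lemma mul_le₂_mpr {x y z : M} (h : le x (oplus z (rneg y))) : le (mul x y) z := by
  apply le_of_oplus_rneg
  have h2 := oplus_rneg_eq_one_of_le h
  rw [rneg_mul, oplus_assoc]
  exact h2

lemma mul_mono_right {b c : M} (a : M) (h : le b c) : le (mul a b) (mul a c) :=
  mul_le₁_mpr (le_trans' h (mul_le₁_mp (le_refl' (mul a c))))

lemma mul_mono_left {b c : M} (a : M) (h : le b c) : le (mul b a) (mul c a) :=
  mul_le₂_mpr (le_trans' h (mul_le₂_mp (le_refl' (mul c a))))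

lemma oplus_mono_right {b c : M} (a : M) (h : le b c) : le (oplus a b) (oplus a c) := by
  have e : oplus b (mul (rneg b) c) = c := h
  have h2 := le_oplus_left (oplus a b) (mul (rneg b) c)
  exact le_of_le_of_eq h2 (by rw [← oplus_assoc, e])

lemma oplus_mono_left {b c : M} (a : M) (h : le b c) : le (oplus b a) (oplus c a) := by
  have e : oplus (mul c (lneg b)) b = c := (sup_eq₃ b c).symm.trans h
  have h2 := le_oplus_right (mul c (lneg b)) (oplus b a)
  exact le_of_le_of_eq h2 (by rw [oplus_assoc, e])

lemma le_sup_left' (x y : M) : le x (sup x y) := le_oplus_left x (mul (rneg x) y)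

lemma sup_le' {x y z : M} (hx : le x z) (hy : le y z) : le (sup x y) z := by
  have h1 : le (sup x y) (sup x z) := oplus_mono_right x (mul_mono_right (rneg x) hy)
  exact le_of_le_of_eq h1 hx

lemma L1 (x y z : M) : le (mul (oplus x y) z) (oplus x (mul y z)) := by
  apply mul_le₂_mpr
  have h1 : le y (oplus (mul y z) (rneg z)) := mul_le₂_mp (le_refl' (mul y z))
  have h2 := oplus_mono_right x h1
  exact le_of_le_of_eq h2 (oplus_assoc x (mul y z) (rneg z))

lemma oplus_self_of_mul_self (x : M) (h : mul x x = x) : oplus x x = x := by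
  have key := a7 x (lneg x)
  rw [a8] at key
  have hx : oplus (lneg x) (lneg x) = lneg x := by rw [← lneg_mul, h]
  rw [hx] at key
  have h2 : mul (oplus x x) (lneg x) = zero := by
    rw [mul_def, ← key, ← mul_def]
    exact mul_lneg_self x
  exact le_antisymm' (le_of_mul_lneg h2) (le_oplus_left x x)

lemma mul_self_of_oplus_self (x : M) (h : oplus x x = x) : mul x x = x := by
  have h2 : mul (rneg x) (rneg x) = rneg x := by rw [← rneg_oplus, h]
  have h3 := oplus_self_of_mul_self _ h2
  have h4 : lneg (oplus (rneg x) (rneg x)) = lneg (rneg x) := by rw [h3]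
  rw [lneg_oplus, lr] at h4
  exact h4

end PseudoMV

theorem stmt13 {M : Type*} [PseudoMV M] (r : M → M) (hr : IsSqrt r) :
    lneg (r zero) = rneg (r zero) ∧
    (oplus (mul (lneg (r zero)) (lneg (r zero))) (mul (lneg (r zero)) (lneg (r zero))) =
      mul (lneg (r zero)) (lneg (r zero))) ∧
    sup (mul (lneg (r zero)) (lneg (r zero))) (r zero) = lneg (r zero) ∧
    (∀ v : M, oplus v v = v → sup v (r zero) = lneg (r zero) →
      v = mul (lneg (r zero)) (lneg (r zero))) := by
  obtain ⟨⟨sq1, sq2⟩, sq3⟩ := hr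
  set a := r zero with ha
  have h0 : mul a a = zero := by rw [ha]; exact sq1 zero
  have haa1 : oplus (lneg a) (lneg a) = one := by
    have h' : rneg (oplus (lneg a) (lneg a)) = zero := h0
    rw [← lr (oplus (lneg a) (lneg a)), h', lneg_zero]
  have haa2 : oplus (rneg a) (rneg a) = one := by
    have h' : lneg (oplus (rneg a) (rneg a)) = zero := (mul_def2 a a) ▸ h0
    rw [← a8 (oplus (rneg a) (rneg a)), h', rneg_zero]
  have hb : le (lneg (lneg a)) a := by
    have hm : mul (lneg (lneg a)) (lneg (lneg a)) = zero := by
      rw [mul_def2, a8, haa1, lneg_one]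
    have h2 : le (mul (lneg (lneg a)) (lneg (lneg a))) zero := by
      rw [hm]; exact le_refl' zero
    have h3 := sq2 zero (lneg (lneg a)) h2
    rwa [← ha] at h3
  have hc : le (rneg (rneg a)) a := by
    have hm : mul (rneg (rneg a)) (rneg (rneg a)) = zero := by
      rw [mul_def, lr, haa2, rneg_one]
    have h2 : le (mul (rneg (rneg a)) (rneg (rneg a))) zero := by
      rw [hm]; exact le_refl' zero
    have h3 := sq2 zero (rneg (rneg a)) h2
    rwa [← ha] at h3
  have h1 : lneg a = rneg a := by
    apply le_antisymm'
    · have h4 := le_lneg_of_le hc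
      rwa [lr] at h4
    · have h4 := le_rneg_of_le hb
      rwa [a8] at h4
  have hAl : lneg (lneg a) = a := by rw [h1, lr]
  have hAr : rneg (lneg a) = a := a8 a
  have hut : lneg (mul (lneg a) (lneg a)) = oplus a a := by rw [lneg_mul, hAl]
  have hts : lneg (oplus a a) = mul (lneg a) (lneg a) := by rw [lneg_oplus]
  have hts2 : le (oplus a a) (r (oplus a a)) := by
    have h2 := sq2 (oplus a a) (oplus a a) (mul_le_left (oplus a a) (oplus a a))
    exact h2
  have hAw : le (lneg a) (r (mul (lneg a) (lneg a))) := by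
    have h2 := sq2 (mul (lneg a) (lneg a)) (lneg a) (le_refl' (mul (lneg a) (lneg a)))
    exact h2
  have hs3 := (sq3 (mul (lneg a) (lneg a))).1
  rw [hut] at hs3
  have hs3' : r (oplus a a) = oplus (lneg (r (mul (lneg a) (lneg a)))) a := hs3
  have hw : le (lneg (r (mul (lneg a) (lneg a)))) a := by
    have h4 := le_lneg_of_le hAw
    rwa [hAl] at h4
  have hst : le (r (oplus a a)) (oplus a a) := by
    have h4 := oplus_mono_left a hw
    exact le_of_eq_of_le hs3'.symm h4
  have hrtt : r (oplus a a) = oplus a a := le_antisymm' hst hts2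
  have htt : mul (oplus a a) (oplus a a) = oplus a a := by
    have h4 := sq1 (oplus a a)
    rwa [hrtt] at h4
  have g2 : oplus (mul (lneg a) (lneg a)) (mul (lneg a) (lneg a)) = mul (lneg a) (lneg a) := by
    rw [← hts, ← lneg_mul, htt]
  have huu : mul (mul (lneg a) (lneg a)) (mul (lneg a) (lneg a)) = mul (lneg a) (lneg a) :=
    mul_self_of_oplus_self _ g2
  have le1 : le (mul (lneg a) (lneg a)) (lneg a) := mul_le_left _ _
  have le2 : le a (lneg a) := by
    apply le_of_mul_lneg
    rw [hAl]
    exact h0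
  have upper : le (sup (mul (lneg a) (lneg a)) a) (lneg a) := sup_le' le1 le2
  have hmuA : mul (mul (lneg a) (lneg a)) (lneg a) = mul (lneg a) (lneg a) := by
    apply le_antisymm' (mul_le_left _ _)
    exact le_of_eq_of_le huu (mul_mono_right _ le1)
  have lower : le (lneg a) (sup (mul (lneg a) (lneg a)) a) := by
    have h6 : le (mul (lneg a) (lneg a)) (mul (mul (lneg a) (lneg a)) (lneg a)) :=
      le_of_eq_of_le huu (mul_mono_right _ le1)
    have h7 := mul_le₂_mp h6
    have e : oplus (mul (mul (lneg a) (lneg a)) (lneg a)) (rneg (lneg a)) =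
        sup (mul (lneg a) (lneg a)) a := by
      rw [hAr, hmuA, sup_eq₂, hmuA]
    exact le_of_le_of_eq h7 e
  have g3 : sup (mul (lneg a) (lneg a)) a = lneg a := le_antisymm' upper lower
  refine ⟨h1, g2, g3, ?_⟩
  intro v hv hsv
  have hvv : mul v v = v := mul_self_of_oplus_self _ hv
  have hvA : le v (lneg a) := le_of_le_of_eq (le_sup_left' v a) hsv
  have hvu : le v (mul (lneg a) (lneg a)) := by
    have p1 : le (mul v v) (mul v (lneg a)) := mul_mono_right _ hvA
    have p2 : le (mul v (lneg a)) (mul (lneg a) (lneg a)) := mul_mono_left _ hvA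
    exact le_trans' (le_of_eq_of_le hvv p1) p2
  have h9 : oplus (mul v (lneg a)) a = lneg a := (sup_eq₂ v a).symm.trans hsv
  have hL := L1 (mul v (lneg a)) a (lneg a)
  have e : mul (oplus (mul v (lneg a)) a) (lneg a) = mul (lneg a) (lneg a) := by rw [h9]
  have hL2 := le_of_eq_of_le e hL
  have e2 : oplus (mul v (lneg a)) (mul a (lneg a)) = mul v (lneg a) := by
    rw [mul_lneg_self, oplus_zero]
  have huv : le (mul (lneg a) (lneg a)) v :=
    le_trans' (le_of_le_of_eq hL2 e2) (mul_le_left v (lneg a))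
  exact le_antisymm' hvu huv
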